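/- arXiv:1502.03775 — 2 statements merged into one kernel-verified Lean document; each statement's English description precedes it below -/
import Mathlib

section
/- Let w be a log-convex weight function on [0,1). Then there exists a sequence (a_k)_{k≥0} of real numbers such that Σ_{k=0}^∞ a_k² r^{2k} ≍ w(r)² for 0 ≤ r < 1, with the series converging uniformly on compact subsets of [0,1). -/
open MeasureTheory Set Metric

noncomputable section

/-- The open unit ball of `ℝ^d` (as `EuclideanSpace`). -/
def unitBall (d : ℕ) : Set (EuclideanSpace ℝ (Fin d)) := Metric.ball 0 1

/-- `f` is harmonic on `s ⊆ ℝ^d`: it is `C²` on a neighborhood-like set and its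
Laplacian (sum of second derivatives in the coordinate directions) vanishes on `s`. -/
def IsHarmonicOn {d : ℕ} (f : EuclideanSpace ℝ (Fin d) → ℝ)
    (s : Set (EuclideanSpace ℝ (Fin d))) : Prop :=
  ContDiffOn ℝ 2 f s ∧ ∀ x ∈ s,
    ∑ i : Fin d, fderiv ℝ (fun y => fderiv ℝ f y (EuclideanSpace.single i 1)) x
      (EuclideanSpace.single i 1) = 0

/-- A weight function: positive, non-decreasing, continuous and unbounded on `[0,1)`. -/
def IsWeight (w : ℝ → ℝ) : Prop :=
  ContinuousOn w (Set.Ico 0 1) ∧ MonotoneOn w (Set.Ico 0 1) ∧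
    (∀ r ∈ Set.Ico (0:ℝ) 1, 0 < w r) ∧
    ∀ M : ℝ, ∃ r ∈ Set.Ico (0:ℝ) 1, M < w r

/-- `w` is log-convex: `log (w r)` is a convex function of `log r` on `(0,1)`. -/
def IsLogConvex (w : ℝ → ℝ) : Prop :=
  ConvexOn ℝ (Set.Iio (0:ℝ)) (fun t => Real.log (w (Real.exp t)))

/-- Two functions are equivalent on `[0,1)`. -/
def EquivOn01 (w v : ℝ → ℝ) : Prop :=
  ∃ c₁ c₂ : ℝ, 0 < c₁ ∧ 0 < c₂ ∧
    ∀ r ∈ Set.Ico (0:ℝ) 1, c₁ * v r ≤ w r ∧ w r ≤ c₂ * v r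

/-- The normalized surface measure on the unit sphere of `ℝ^d`. -/
def sphereMeasure (d : ℕ) : Measure (Metric.sphere (0 : EuclideanSpace ℝ (Fin d)) 1) :=
  ((volume : Measure (EuclideanSpace ℝ (Fin d))).toSphere Set.univ)⁻¹ •
    (volume : Measure (EuclideanSpace ℝ (Fin d))).toSphere

/-- The squared `L²`-mean of `f` on the sphere of radius `r`. -/
def M2sq {d : ℕ} (f : EuclideanSpace ℝ (Fin d) → ℝ) (r : ℝ) : ℝ :=
  ∫ y : Metric.sphere (0 : EuclideanSpace ℝ (Fin d)) 1,
    (f (r • (y : EuclideanSpace ℝ (Fin d))))^2 ∂(sphereMeasure d)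

namespace AD

def t0 : ℝ := -Real.log 2

def Dom : Set ℝ := Set.Ico t0 0

lemma t0_neg : t0 < 0 := by
  simp only [t0, neg_neg, neg_lt_zero]; positivity

lemma t0_mem : t0 ∈ Dom := ⟨le_refl _, t0_neg⟩

lemma dom_sub (a b : ℝ) (ha : a ∈ Dom) (hb : b ∈ Dom) : a - b < Real.log 2 := by
  obtain ⟨ha1, ha2⟩ := ha; obtain ⟨hb1, hb2⟩ := hb
  simp only [t0] at hb1
  linarith

lemma dom_convex : Convex ℝ Dom := convex_Ico _ _

variable (w : ℝ → ℝ)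

def phi (t : ℝ) : ℝ := 2 * Real.log (w (Real.exp t))

lemma exp_mem {t : ℝ} (ht : t ∈ Dom) : Real.exp t ∈ Set.Ico (0:ℝ) 1 := by
  obtain ⟨h1, h2⟩ := ht
  exact ⟨le_of_lt (Real.exp_pos t), by simpa using Real.exp_lt_one_iff.mpr h2⟩

lemma exp_ge {t : ℝ} (ht : t ∈ Dom) : (1:ℝ)/2 ≤ Real.exp t := by
  obtain ⟨h1, _⟩ := ht
  have : Real.exp t0 ≤ Real.exp t := Real.exp_le_exp.mpr h1
  have h2 : Real.exp t0 = 1/2 := by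
    simp only [t0]
    rw [Real.exp_neg, Real.exp_log (by norm_num : (0:ℝ) < 2)]
    norm_num
  linarith

lemma phi_cont (hw : IsWeight w) : ContinuousOn (phi w) Dom := by
  have h1 : ContinuousOn (fun t : ℝ => w (Real.exp t)) Dom :=
    hw.1.comp (Real.continuous_exp.continuousOn) (fun t ht => exp_mem ht)
  have h2 : ContinuousOn (fun t : ℝ => Real.log (w (Real.exp t))) Dom :=
    h1.log (fun t ht => ne_of_gt (hw.2.2.1 _ (exp_mem ht)))
  exact (h2.const_smul (2:ℝ)).congr (fun t _ => by simp [phi])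

lemma phi_mono (hw : IsWeight w) : MonotoneOn (phi w) Dom := by
  intro a ha b hb hab
  have : w (Real.exp a) ≤ w (Real.exp b) :=
    hw.2.1 (exp_mem ha) (exp_mem hb) (Real.exp_le_exp.mpr hab)
  have hpa : 0 < w (Real.exp a) := hw.2.2.1 _ (exp_mem ha)
  simp only [phi]
  have := Real.log_le_log hpa this
  linarith

lemma phi_convex (hlc : IsLogConvex w) : ConvexOn ℝ Dom (phi w) := by
  have h : ConvexOn ℝ Dom (fun t => Real.log (w (Real.exp t))) :=
    hlc.subset (fun t ht => ht.2) dom_convex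
  show ConvexOn ℝ Dom (fun t => 2 * Real.log (w (Real.exp t)))
  simpa using h.smul (by norm_num : (0:ℝ) ≤ 2)

lemma phi_unbdd (hw : IsWeight w) (M : ℝ) : ∃ τ ∈ Dom, ∀ t ∈ Dom, τ ≤ t → M < phi w t := by
  obtain ⟨r, hr, hrM⟩ := hw.2.2.2 (Real.exp (M/2))
  set r' := max r (1/2) with hr'
  have hr'mem : r' ∈ Set.Ico (0:ℝ) 1 := by
    constructor
    · exact le_trans (by norm_num) (le_max_right _ _)
    · exact max_lt hr.2 (by norm_num)
  have hr'pos : 0 < r' := lt_of_lt_of_le (by norm_num) (le_max_right _ _)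
  refine ⟨Real.log r', ⟨?_, ?_⟩, ?_⟩
  · simp only [t0]
    rw [← Real.log_inv]
    exact Real.log_le_log (by norm_num) (by rw [inv_eq_one_div]; exact le_max_right _ _)
  · exact Real.log_neg hr'pos hr'mem.2
  · intro t ht hτt
    have h1 : w r' ≤ w (Real.exp t) := by
      apply hw.2.1 hr'mem (exp_mem ht)
      calc r' = Real.exp (Real.log r') := (Real.exp_log hr'pos).symm
        _ ≤ Real.exp t := Real.exp_le_exp.mpr hτt
    have h2 : w r ≤ w r' := hw.2.1 hr hr'mem (le_max_left _ _)
    have h3 : Real.exp (M/2) < w (Real.exp t) := by linarith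
    have h4 : M/2 < Real.log (w (Real.exp t)) := by
      have := Real.log_lt_log (Real.exp_pos _) h3
      simpa using this
    simp only [phi]; linarith



variable (w : ℝ → ℝ)

/-- Legendre-type transform value at even slope `2k`. -/
def psi (k : ℕ) : ℝ := sSup ((fun t => 2*(k:ℝ)*t - phi w t) '' Dom)

def gap (k : ℕ) (t : ℝ) : ℝ := phi w t + psi w k - 2*(k:ℝ)*t

lemma psi_bddAbove (hw : IsWeight w) (k : ℕ) :
    BddAbove ((fun t => 2*(k:ℝ)*t - phi w t) '' Dom) := by
  refine ⟨-phi w t0, ?_⟩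
  rintro y ⟨t, ht, rfl⟩
  show 2*(k:ℝ)*t - phi w t ≤ -phi w t0
  have h1 : phi w t0 ≤ phi w t := phi_mono w hw t0_mem ht ht.1
  have h2 : 2*(k:ℝ)*t ≤ 0 := by
    have : t < 0 := ht.2
    have : 2*(k:ℝ) ≥ 0 := by positivity
    nlinarith
  linarith

lemma psi_nonempty (k : ℕ) :
    ((fun t => 2*(k:ℝ)*t - phi w t) '' Dom).Nonempty :=
  ⟨_, Set.mem_image_of_mem _ t0_mem⟩

lemma gap_nonneg (hw : IsWeight w) (k : ℕ) {t : ℝ} (ht : t ∈ Dom) : 0 ≤ gap w k t := by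
  have h : 2*(k:ℝ)*t - phi w t ≤ psi w k :=
    le_csSup (psi_bddAbove w hw k) (Set.mem_image_of_mem _ ht)
  simp only [gap]; linarith

lemma gap_exists_small (k : ℕ) {ε : ℝ} (hε : 0 < ε) :
    ∃ t ∈ Dom, gap w k t < ε := by
  have h := exists_lt_of_lt_csSup (psi_nonempty w k) (by linarith : psi w k - ε < psi w k)
  obtain ⟨y, ⟨t, ht, rfl⟩, hy⟩ := h
  dsimp only at hy
  exact ⟨t, ht, by simp only [gap]; linarith⟩

lemma gap_convex (hlc : IsLogConvex w) (k : ℕ) : ConvexOn ℝ Dom (gap w k) := by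
  have haff : ConvexOn ℝ Dom (fun t : ℝ => psi w k - 2*(k:ℝ)*t) := by
    refine ⟨dom_convex, ?_⟩
    intro x hx y hy p q hp hq hpq
    apply le_of_eq
    simp only [smul_eq_mul]
    linear_combination (-(psi w k)) * hpq
  have h2 := (phi_convex w hlc).add haff
  have heq : (phi w + fun t => psi w k - 2*(k:ℝ)*t) = gap w k := by
    funext t; simp only [gap, Pi.add_apply]; ring
  rwa [heq] at h2

lemma gap_cont (hw : IsWeight w) (k : ℕ) : ContinuousOn (gap w k) Dom := by
  have h1 : ContinuousOn (fun t : ℝ => psi w k - 2*(k:ℝ)*t) Dom := by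
    apply ContinuousOn.sub continuousOn_const
    exact (continuous_const.mul continuous_id).continuousOn
  have h2 := (phi_cont w hw).add h1
  have heq : (fun t => phi w t + (psi w k - 2*(k:ℝ)*t)) = gap w k := by
    funext t; simp only [gap]; ring
  rw [← heq]; exact h2

/-- key constant: `2 log 2 < 3/2`. -/
def A0 : ℝ := 2 * Real.log 2

lemma A0_lt : A0 < 3/2 := by
  have := Real.log_two_lt_d9
  simp only [A0]; linarith

lemma A0_pos : 0 < A0 := by
  have := Real.log_two_gt_d9
  simp only [A0]; linarith

/-- Existence of an approximate supporting tangent with even integer slope. -/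
lemma approx_tangent (hw : IsWeight w) (hlc : IsLogConvex w) {θ : ℝ} (hθ : θ ∈ Dom) :
    ∃ k : ℕ, gap w k θ ≤ A0 := by
  classical
  have hθ0 : θ < 0 := hθ.2
  -- slope set to the right
  set S : Set ℝ := (fun s => (phi w s - phi w θ)/(s - θ)) '' (Set.Ioo θ 0) with hS
  have hmemD : ∀ s ∈ Set.Ioo θ 0, s ∈ Dom := fun s hs => ⟨le_trans hθ.1 (le_of_lt hs.1), hs.2⟩
  have hSne : S.Nonempty := ⟨_, Set.mem_image_of_mem _ (by constructor <;> [linarith; linarith] : θ/2 ∈ Set.Ioo θ 0)⟩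
  have hSbdd : BddBelow S := by
    refine ⟨0, ?_⟩
    rintro y ⟨s, hs, rfl⟩
    have h1 : phi w θ ≤ phi w s := phi_mono w hw hθ (hmemD s hs) (le_of_lt hs.1)
    have h2 : 0 < s - θ := by linarith [hs.1]
    exact div_nonneg (by linarith) (le_of_lt h2)
  set m : ℝ := sInf S with hm
  have hm0 : 0 ≤ m := le_csInf hSne (by rintro y ⟨s, hs, rfl⟩
                                        have h1 : phi w θ ≤ phi w s := phi_mono w hw hθ (hmemD s hs) (le_of_lt hs.1)
                                        have h2 : 0 < s - θ := by linarith [hs.1]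
                                        exact div_nonneg (by linarith) (le_of_lt h2))
  -- supporting property of m
  have hsupp : ∀ t ∈ Dom, phi w t ≥ phi w θ + m * (t - θ) := by
    intro t ht
    rcases lt_trichotomy t θ with hlt | heq | hgt
    · -- left of θ : slope (t,θ) ≤ every slope (θ,s)
      have hlb : ∀ y ∈ S, (phi w θ - phi w t)/(θ - t) ≤ y := by
        rintro y ⟨s, hs, rfl⟩
        exact (phi_convex w hlc).slope_mono_adjacent ht (hmemD s hs) hlt hs.1
      have := le_csInf hSne hlb
      have hd : 0 < θ - t := by linarith
      rw [div_le_iff₀ hd] at this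
      nlinarith
    · subst heq; simp
    · -- right of θ
      have : m ≤ (phi w t - phi w θ)/(t - θ) :=
        csInf_le hSbdd (Set.mem_image_of_mem _ ⟨hgt, ht.2⟩)
      have hd : 0 < t - θ := by linarith
      rw [le_div_iff₀ hd] at this
      linarith
  -- round up to even integer slope
  set k : ℕ := ⌈m/2⌉₊ with hk
  have hk1 : m ≤ 2*(k:ℝ) := by
    have := Nat.le_ceil (m/2)
    simp only [hk]; linarith
  have hk2 : 2*(k:ℝ) < m + 2 := by
    have := Nat.ceil_lt_add_one (by positivity : 0 ≤ m/2)
    simp only [hk]; linarith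
  refine ⟨k, ?_⟩
  -- gap k θ ≤ A0  ⟺  psi k ≤ A0 + 2kθ - φθ
  have hpsi : psi w k ≤ A0 + 2*(k:ℝ)*θ - phi w θ := by
    apply csSup_le (psi_nonempty w k)
    rintro y ⟨t, ht, rfl⟩
    have hs := hsupp t ht
    rcases le_or_gt θ t with h | h
    · -- t ≥ θ : use error bound (2k - m)(t-θ) ≤ 2 log 2
      have hub : t - θ < Real.log 2 := dom_sub t θ ht hθ
      have h1 : (2*(k:ℝ) - m) * (t - θ) ≤ 2 * Real.log 2 := by
        have h2 : 0 ≤ 2*(k:ℝ) - m := by linarith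
        have h3 : 2*(k:ℝ) - m < 2 := by linarith
        have h4 : 0 ≤ t - θ := by linarith
        nlinarith
      simp only [A0]; nlinarith
    · -- t < θ : 2k(t-θ) ≤ m(t-θ)
      have h1 : 2*(k:ℝ)*(t-θ) ≤ m*(t-θ) := by nlinarith
      have := A0_pos
      simp only [A0] at *; nlinarith
  simp only [gap]; linarith

/-- Neighborhood control: if the gap is `< 2` at a point, it stays `< 2` nearby in `Dom`. -/
lemma gap_nbhd (hw : IsWeight w) (k : ℕ) {u : ℝ} (hu : u ∈ Dom) (h : gap w k u < 2) :
    ∃ ε > 0, ∀ x ∈ Dom, |x - u| < ε → gap w k x < 2 := by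
  have h1 : ContinuousWithinAt (gap w k) Dom u := (gap_cont w hw k).continuousWithinAt hu
  have h2 : (gap w k) ⁻¹' (Set.Iio 2) ∈ nhdsWithin u Dom := h1 (Iio_mem_nhds h)
  rw [Metric.mem_nhdsWithin_iff] at h2
  obtain ⟨ε, hε, hsub⟩ := h2
  refine ⟨ε, hε, fun x hx hdx => ?_⟩
  have : x ∈ Metric.ball u ε ∩ Dom := ⟨by simpa [Real.dist_eq] using hdx, hx⟩
  exact hsub this

lemma gap_right_pt (hw : IsWeight w) (k : ℕ) {u : ℝ} (hu : u ∈ Dom) (h : gap w k u < 2) :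
    ∃ v ∈ Dom, u < v ∧ gap w k v < 2 := by
  obtain ⟨ε, hε, hctl⟩ := gap_nbhd w hw k hu h
  have hu0 : u < 0 := hu.2
  refine ⟨u + min (ε/2) (-u/2), ⟨?_, ?_⟩, ?_, ?_⟩
  · have : (0:ℝ) < min (ε/2) (-u/2) := lt_min (by linarith) (by linarith)
    have := hu.1; linarith
  · have : min (ε/2) (-u/2) ≤ -u/2 := min_le_right _ _
    linarith
  · have : (0:ℝ) < min (ε/2) (-u/2) := lt_min (by linarith) (by linarith)
    linarith
  · apply hctl
    · constructor
      · have : (0:ℝ) < min (ε/2) (-u/2) := lt_min (by linarith) (by linarith)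
        have := hu.1; linarith
      · have : min (ε/2) (-u/2) ≤ -u/2 := min_le_right _ _
        linarith
    · have h1 : (0:ℝ) < min (ε/2) (-u/2) := lt_min (by linarith) (by linarith)
      have h2 : min (ε/2) (-u/2) ≤ ε/2 := min_le_left _ _
      rw [abs_lt]; constructor <;> linarith

/-- One greedy step of the construction. -/
def IsStep (θ θ' : ℝ) (k : ℕ) : Prop :=
  θ' ∈ Dom ∧ θ < θ' ∧ gap w k θ ≤ 2 ∧ (∀ t, θ ≤ t → t < θ' → gap w k t ≤ 2) ∧
    (∀ k' : ℕ, gap w k' θ ≤ 2 → ∀ t ∈ Dom, θ' < t → 2 < gap w k' t)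

lemma step_exists (hw : IsWeight w) (hlc : IsLogConvex w) {θ : ℝ} (hθ : θ ∈ Dom) :
    ∃ θ' k, IsStep w θ θ' k := by
  classical
  have hθ0 : θ < 0 := hθ.2
  have hhalf : θ/2 ∈ Dom := ⟨le_trans hθ.1 (by linarith), by linarith⟩
  -- bound on admissible slopes
  set C : ℝ := phi w (θ/2) - phi w θ with hC
  have hC0 : 0 ≤ C := by
    have := phi_mono w hw hθ hhalf (by linarith)
    simp only [hC]; linarith
  set Kb : ℕ := ⌈(C+3)/(-θ)⌉₊ with hKb
  have hKbig : ∀ k : ℕ, Kb ≤ k → 2 < gap w k θ := by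
    intro k hk
    have h1 : psi w k ≥ 2*(k:ℝ)*(θ/2) - phi w (θ/2) :=
      le_csSup (psi_bddAbove w hw k) (Set.mem_image_of_mem _ hhalf)
    have h2 : (C+3)/(-θ) ≤ (k:ℝ) := le_trans (Nat.le_ceil _) (by exact_mod_cast hk)
    have h3 : C + 3 ≤ (k:ℝ) * (-θ) := by
      rw [div_le_iff₀ (by linarith : (0:ℝ) < -θ)] at h2
      linarith
    have e1 : 2*(k:ℝ)*(θ/2) = (k:ℝ)*θ := by ring
    rw [e1] at h1
    have e2 : (k:ℝ) * -θ = -((k:ℝ)*θ) := by ring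
    rw [e2] at h3
    have e3 : gap w k θ = phi w θ + psi w k - 2*((k:ℝ)*θ) := by simp only [gap]; ring
    rw [e3]
    have hCC : C = phi w (θ / 2) - phi w θ := hC
    clear_value C Kb
    subst hCC
    linarith [h1, h3]
  set A : Finset ℕ := Finset.filter (fun k => gap w k θ ≤ 2) (Finset.range Kb) with hA
  obtain ⟨ka, hka⟩ := approx_tangent w hw hlc hθ
  have hka2 : gap w ka θ ≤ 2 := le_trans hka (by linarith [A0_lt])
  have hkaA : ka ∈ A := by
    simp only [hA, Finset.mem_filter, Finset.mem_range]
    refine ⟨?_, hka2⟩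
    by_contra hcon
    push_neg at hcon
    exact absurd (hKbig ka hcon) (by linarith)
  -- the sup of validity for each k
  set B : ℕ → Set ℝ := fun k => {t ∈ Dom | gap w k t ≤ 2} with hB
  have hBne : ∀ k ∈ A, (B k).Nonempty := by
    intro k hk
    simp only [hA, Finset.mem_filter] at hk
    exact ⟨θ, hθ, hk.2⟩
  have hBbdd : ∀ k, BddAbove (B k) := by
    intro k
    exact ⟨0, fun t ht => le_of_lt ht.1.2⟩
  set beta : ℕ → ℝ := fun k => sSup (B k) with hbeta
  have hbeta_lt0 : ∀ k ∈ A, beta k < 0 := by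
    intro k hk
    obtain ⟨τ, hτ, hτM⟩ := phi_unbdd w hw (2 - psi w k)
    have hub : ∀ t ∈ B k, t ≤ τ := by
      intro t ht
      by_contra hcon
      push_neg at hcon
      have h1 := hτM t ht.1 (le_of_lt hcon)
      have h2 : 0 ≤ -(2*(k:ℝ)*t) := by
        have : t < 0 := ht.1.2
        have : (0:ℝ) ≤ 2*(k:ℝ) := by positivity
        nlinarith
      have : 2 < gap w k t := by simp only [gap]; nlinarith
      linarith [ht.2]
    have := csSup_le (hBne k hk) hub
    exact lt_of_le_of_lt this hτ.2
  have hbeta_mem : ∀ k ∈ A, beta k ∈ Dom := by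
    intro k hk
    refine ⟨?_, hbeta_lt0 k hk⟩
    have : θ ≤ beta k := le_csSup (hBbdd k) ⟨hθ, by simp only [hA, Finset.mem_filter] at hk; exact hk.2⟩
    linarith [hθ.1]
  have hbeta_after : ∀ k ∈ A, ∀ t ∈ Dom, beta k < t → 2 < gap w k t := by
    intro k hk t ht hbt
    by_contra hcon
    push_neg at hcon
    have : t ≤ beta k := le_csSup (hBbdd k) ⟨ht, hcon⟩
    linarith
  have hbeta_before : ∀ k ∈ A, ∀ t, θ ≤ t → t < beta k → gap w k t ≤ 2 := by
    intro k hk t hθt htb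
    obtain ⟨y, hy, hty⟩ := exists_lt_of_lt_csSup (hBne k hk) htb
    have hkθ : gap w k θ ≤ 2 := by simp only [hA, Finset.mem_filter] at hk; exact hk.2
    have hseg : t ∈ segment ℝ θ y := by
      rw [segment_eq_Icc (by linarith : θ ≤ y)]
      exact ⟨hθt, le_of_lt hty⟩
    have := (gap_convex w hlc k).le_on_segment hθ hy.1 hseg
    calc gap w k t ≤ max (gap w k θ) (gap w k y) := this
      _ ≤ 2 := max_le hkθ hy.2
  -- pick the maximal beta
  have hAne : A.Nonempty := ⟨ka, hkaA⟩
  obtain ⟨k0, hk0A, hk0max⟩ := A.exists_max_image beta hAne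
  refine ⟨beta k0, k0, hbeta_mem k0 hk0A, ?_, ?_, ?_, ?_⟩
  · -- θ < beta k0 via the approximate tangent
    obtain ⟨v, hv, hθv, hgv⟩ := gap_right_pt w hw ka hθ (lt_of_le_of_lt hka (by linarith [A0_lt]))
    have h1 : v ≤ beta ka := le_csSup (hBbdd ka) ⟨hv, le_of_lt hgv⟩
    have h2 : beta ka ≤ beta k0 := hk0max ka hkaA
    linarith
  · simp only [hA, Finset.mem_filter] at hk0A; exact hk0A.2
  · exact hbeta_before k0 hk0A
  · intro k' hk' t ht hbt
    have hk'A : k' ∈ A := by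
      simp only [hA, Finset.mem_filter, Finset.mem_range]
      refine ⟨?_, hk'⟩
      by_contra hcon
      push_neg at hcon
      exact absurd (hKbig k' hcon) (by linarith)
    exact hbeta_after k' hk'A t ht (lt_of_le_of_lt (hk0max k' hk'A) hbt)

variable (hw : IsWeight w) (hlc : IsLogConvex w)

attribute [local instance] Classical.propDecidable

/-- The greedy sequence of points and chosen tangent slopes. -/
def thK : ℕ → ℝ × ℕ
  | 0 => (t0, 0)
  | n+1 =>
    let p := thK n
    if h : p.1 ∈ Dom then
      ((step_exists w hw hlc h).choose,
        (step_exists w hw hlc h).choose_spec.choose)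
    else (0, 0)

def th (n : ℕ) : ℝ := (thK w hw hlc n).1

def KK (n : ℕ) : ℕ := if h : th w hw hlc n ∈ Dom then
    (step_exists w hw hlc h).choose_spec.choose else 0

lemma th_zero : th w hw hlc 0 = t0 := rfl

lemma th_mem : ∀ n, th w hw hlc n ∈ Dom := by
  intro n
  induction n with
  | zero => exact t0_mem
  | succ n ih =>
    show (thK w hw hlc (n+1)).1 ∈ Dom
    simp only [thK]
    rw [dif_pos (show (thK w hw hlc n).1 ∈ Dom from ih)]
    exact ((step_exists w hw hlc (show (thK w hw hlc n).1 ∈ Dom from ih)).choose_spec.choose_spec).1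

lemma th_step (n : ℕ) :
    IsStep w (th w hw hlc n) (th w hw hlc (n+1)) (KK w hw hlc n) := by
  have h := th_mem w hw hlc n
  have e1 : th w hw hlc (n+1) = (step_exists w hw hlc h).choose := by
    show (thK w hw hlc (n+1)).1 = _
    simp only [thK]
    rw [dif_pos (show (thK w hw hlc n).1 ∈ Dom from h)]
    rfl
  have e2 : KK w hw hlc n = (step_exists w hw hlc h).choose_spec.choose := by
    simp only [KK]
    rw [dif_pos h]
  rw [e1, e2]
  exact (step_exists w hw hlc h).choose_spec.choose_spec

lemma th_lt (n : ℕ) : th w hw hlc n < th w hw hlc (n+1) := (th_step w hw hlc n).2.1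

lemma th_mono : StrictMono (th w hw hlc) := strictMono_nat_of_lt_succ (th_lt w hw hlc)

lemma gap_at_th (n : ℕ) : gap w (KK w hw hlc n) (th w hw hlc n) ≤ 2 := (th_step w hw hlc n).2.2.1

lemma gap_valid (n : ℕ) {t : ℝ} (h1 : th w hw hlc n ≤ t) (h2 : t < th w hw hlc (n+1)) :
    gap w (KK w hw hlc n) t ≤ 2 := (th_step w hw hlc n).2.2.2.1 t h1 h2

lemma th_maximal (n : ℕ) {k' : ℕ} (hk' : gap w k' (th w hw hlc n) ≤ 2)
    {t : ℝ} (ht : t ∈ Dom) (htn : th w hw hlc (n+1) < t) : 2 < gap w k' t :=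
  (th_step w hw hlc n).2.2.2.2 k' hk' t ht htn

/-- The sequence eventually exceeds any point of `Dom`. -/
lemma th_exceeds {t : ℝ} (ht : t ∈ Dom) : ∃ n, t < th w hw hlc n := by
  by_contra hcon
  push_neg at hcon
  have hbdd : BddAbove (Set.range (th w hw hlc)) := ⟨t, by rintro y ⟨n, rfl⟩; exact hcon n⟩
  have hne : (Set.range (th w hw hlc)).Nonempty := ⟨_, ⟨0, rfl⟩⟩
  set T : ℝ := sSup (Set.range (th w hw hlc)) with hT
  have hTle : ∀ n, th w hw hlc n ≤ T := fun n => le_csSup hbdd ⟨n, rfl⟩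
  have hTt : T ≤ t := csSup_le hne (by rintro y ⟨n, rfl⟩; exact hcon n)
  have hTmem : T ∈ Dom := ⟨le_trans (th_mem w hw hlc 0).1 (hTle 0), lt_of_le_of_lt hTt ht.2⟩
  obtain ⟨ks, hks⟩ := approx_tangent w hw hlc hTmem
  have hks2 : gap w ks T < 2 := lt_of_le_of_lt hks (by linarith [A0_lt])
  obtain ⟨ε, hε, hctl⟩ := gap_nbhd w hw ks hTmem hks2
  obtain ⟨y, ⟨n, rfl⟩, hny⟩ := exists_lt_of_lt_csSup hne (by linarith : T - ε < T)
  have h1 : gap w ks (th w hw hlc n) < 2 := by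
    apply hctl _ (th_mem w hw hlc n)
    rw [abs_lt]
    constructor <;> [linarith [hTle n]; linarith [hTle n]]
  -- pick a point beyond T but within ε and inside Dom
  have hT0 : T < 0 := hTmem.2
  set v : ℝ := T + min (ε/2) (-T/2) with hv
  have hmin : 0 < min (ε/2) (-T/2) := lt_min (by linarith) (by linarith)
  have hvD : v ∈ Dom := by
    constructor
    · have := hTmem.1; simp only [hv]; linarith
    · have : min (ε/2) (-T/2) ≤ -T/2 := min_le_right _ _
      simp only [hv]; linarith
  have hvgap : gap w ks v < 2 := by
    apply hctl _ hvD
    have : min (ε/2) (-T/2) ≤ ε/2 := min_le_left _ _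
    rw [abs_lt]
    constructor <;> [simp only [hv]; skip]
    · linarith
    · simp only [hv]; linarith
  have := th_maximal w hw hlc n (le_of_lt h1) hvD (by
    have := hTle (n+1)
    simp only [hv]; linarith)
  linarith

/-- The index of the interval containing `t`. -/
lemma th_interval {t : ℝ} (ht : t ∈ Dom) :
    ∃ I, th w hw hlc I ≤ t ∧ t < th w hw hlc (I+1) := by
  have hex : ∃ n, t < th w hw hlc n := th_exceeds w hw hlc ht
  classical
  have hNs : t < th w hw hlc (Nat.find hex) := Nat.find_spec hex
  have hN0 : Nat.find hex ≠ 0 := by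
    intro h
    rw [h, th_zero] at hNs
    exact absurd hNs (not_lt.mpr ht.1)
  obtain ⟨I, hI⟩ := Nat.exists_eq_succ_of_ne_zero hN0
  refine ⟨I, ?_, by rw [show I + 1 = Nat.find hex by omega]; exact hNs⟩
  have := Nat.find_min hex (show I < Nat.find hex by omega)
  push_neg at this
  exact this

def g0 : ℝ := 2 - A0

lemma g0_pos : 0 < g0 := by have := A0_lt; simp only [g0]; linarith

lemma g0_gt_half : 1/2 < g0 := by have := A0_lt; simp only [g0]; linarith

lemma gap_sub (k : ℕ) (s t : ℝ) :
    gap w k t - gap w k s = (phi w t - phi w s) - 2*(k:ℝ)*(t - s) := by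
  simp only [gap]; ring

lemma gap_gap (a b : ℕ) (s t : ℝ) :
    (gap w a t - gap w b t) - (gap w a s - gap w b s) = 2*((b:ℝ) - (a:ℝ))*(t - s) := by
  simp only [gap]; ring

/-- Expired tangents stay expired (M2). -/
lemma gap_expired (i m : ℕ) (him : i + 2 ≤ m) :
    2 < gap w (KK w hw hlc i) (th w hw hlc m) := by
  apply th_maximal w hw hlc i (gap_at_th w hw hlc i) (th_mem w hw hlc m)
  exact th_mono w hw hlc (by omega)

/-- Tangents chosen later are not valid earlier (M4). -/
lemma gap_before (j : ℕ) (hj : 1 ≤ j) :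
    2 < gap w (KK w hw hlc j) (th w hw hlc (j-1)) := by
  by_contra hcon
  push_neg at hcon
  set t : ℝ := (th w hw hlc j + th w hw hlc (j+1))/2 with htdef
  have h1 : th w hw hlc j < t := by
    have := th_lt w hw hlc j; simp only [htdef]; linarith
  have h2 : t < th w hw hlc (j+1) := by
    have := th_lt w hw hlc j; simp only [htdef]; linarith
  have htD : t ∈ Dom := by
    constructor
    · exact le_trans (th_mem w hw hlc j).1 (le_of_lt h1)
    · exact lt_trans h2 (th_mem w hw hlc (j+1)).2
  have h3 := th_maximal w hw hlc (j-1) hcon htD (by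
    rw [show j - 1 + 1 = j by omega]; exact h1)
  have h4 := gap_valid w hw hlc j (le_of_lt h1) h2
  linarith

/-- Monotonicity of the gap beyond the expiry time. -/
lemma fwd_mono (i : ℕ) {u t : ℝ} (hu : u ∈ Dom) (ht : t ∈ Dom)
    (hu1 : th w hw hlc (i+1) < u) (hut : u ≤ t) :
    gap w (KK w hw hlc i) u ≤ gap w (KK w hw hlc i) t := by
  obtain ⟨ts, htsD, hts⟩ := gap_exists_small w (KK w hw hlc i) (by norm_num : (0:ℝ) < 1/2)
  have hgu : 2 < gap w (KK w hw hlc i) u :=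
    th_maximal w hw hlc i (gap_at_th w hw hlc i) hu hu1
  have htsu : ts < u := by
    by_contra hcon
    push_neg at hcon
    have hseg : u ∈ segment ℝ (th w hw hlc i) ts := by
      rw [segment_eq_Icc (by linarith [th_lt w hw hlc i] : th w hw hlc i ≤ ts)]
      exact ⟨by linarith [th_lt w hw hlc i], hcon⟩
    have := (gap_convex w hlc (KK w hw hlc i)).le_on_segment (th_mem w hw hlc i) htsD hseg
    have h5 := gap_at_th w hw hlc i
    have := le_trans this (max_le h5 (le_of_lt (by linarith : gap w (KK w hw hlc i) ts < 2)))
    linarith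
  rcases eq_or_lt_of_le hut with heq | hlt
  · rw [heq]
  · have hs := (gap_convex w hlc (KK w hw hlc i)).slope_mono_adjacent htsD ht htsu hlt
    rw [div_le_div_iff₀ (by linarith) (by linarith)] at hs
    nlinarith

/-- Monotonicity of the gap before the start of validity. -/
lemma bwd_mono (j : ℕ) (hj : 1 ≤ j) {u t : ℝ} (hu : u ∈ Dom) (ht : t ∈ Dom)
    (hu1 : u ≤ th w hw hlc (j-1)) (htu : t ≤ u) :
    gap w (KK w hw hlc j) u ≤ gap w (KK w hw hlc j) t := by
  obtain ⟨ts, htsD, hts⟩ := gap_exists_small w (KK w hw hlc j) (by norm_num : (0:ℝ) < 1/2)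
  have hts2 : th w hw hlc (j-1) < ts := by
    by_contra hcon
    push_neg at hcon
    have hseg : th w hw hlc (j-1) ∈ segment ℝ ts (th w hw hlc j) := by
      rw [segment_eq_Icc (le_trans hcon (th_mono w hw hlc |>.monotone (by omega)))]
      exact ⟨hcon, th_mono w hw hlc |>.monotone (by omega)⟩
    have := (gap_convex w hlc (KK w hw hlc j)).le_on_segment htsD (th_mem w hw hlc j) hseg
    have h5 := gap_at_th w hw hlc j
    have h6 := gap_before w hw hlc j hj
    have := le_trans this (max_le (le_of_lt (by linarith : gap w (KK w hw hlc j) ts < 2)) h5)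
    linarith
  have hgu : 2 < gap w (KK w hw hlc j) u := by
    rcases eq_or_lt_of_le hu1 with heq | hlt
    · rw [heq]; exact gap_before w hw hlc j hj
    · have hseg : th w hw hlc (j-1) ∈ segment ℝ u ts := by
        rw [segment_eq_Icc (by linarith : u ≤ ts)]
        exact ⟨hu1, le_of_lt hts2⟩
      have := (gap_convex w hlc (KK w hw hlc j)).le_on_segment hu htsD hseg
      have h6 := gap_before w hw hlc j hj
      rcases le_max_iff.mp this with h | h
      · linarith
      · linarith
  rcases eq_or_lt_of_le htu with heq | hlt
  · rw [heq]
  · have hus : u < ts := by linarith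
    have hs := (gap_convex w hlc (KK w hw hlc j)).slope_mono_adjacent ht htsD hlt hus
    rw [div_le_div_iff₀ (by linarith) (by linarith)] at hs
    nlinarith

/-- Forward growth of the gap of an expired tangent: one interval adds at least `g0`. -/
lemma growth_fwd (i m : ℕ) (him : i + 2 ≤ m) :
    gap w (KK w hw hlc i) (th w hw hlc m) + g0 ≤ gap w (KK w hw hlc i) (th w hw hlc (m+1)) := by
  obtain ⟨k', hk'⟩ := approx_tangent w hw hlc (th_mem w hw hlc m)
  have hk'2 : gap w k' (th w hw hlc m) ≤ 2 := le_trans hk' (by linarith [A0_lt])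
  -- Claim 1 : gap k' at th (m+1) is at least 2
  have hcl1 : 2 ≤ gap w k' (th w hw hlc (m+1)) := by
    by_contra hcon
    push_neg at hcon
    obtain ⟨v, hvD, hv1, hv2⟩ := gap_right_pt w hw k' (th_mem w hw hlc (m+1)) hcon
    have := th_maximal w hw hlc m hk'2 hvD hv1
    linarith
  -- Claim 2 : k' is strictly bigger than KK i
  obtain ⟨ts, htsD, hts⟩ := gap_exists_small w (KK w hw hlc i) (by norm_num : (0:ℝ) < 1/2)
  have hgm : 2 < gap w (KK w hw hlc i) (th w hw hlc m) := gap_expired w hw hlc i m him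
  have htsm : ts < th w hw hlc m := by
    by_contra hcon
    push_neg at hcon
    have hseg : th w hw hlc m ∈ segment ℝ (th w hw hlc i) ts := by
      rw [segment_eq_Icc (le_trans (th_mono w hw hlc |>.monotone (by omega)) hcon)]
      exact ⟨th_mono w hw hlc |>.monotone (by omega), hcon⟩
    have := (gap_convex w hlc (KK w hw hlc i)).le_on_segment (th_mem w hw hlc i) htsD hseg
    have h5 := gap_at_th w hw hlc i
    rcases le_max_iff.mp this with h | h
    · linarith
    · linarith
  have hcl2 : (KK w hw hlc i : ℝ) + 1 ≤ (k' : ℝ) := by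
    have hd := gap_gap w (KK w hw hlc i) k' ts (th w hw hlc m)
    have h1 : gap w (KK w hw hlc i) (th w hw hlc m) - gap w k' (th w hw hlc m) ≥ 2 - A0 := by
      linarith
    have h2 : gap w (KK w hw hlc i) ts - gap w k' ts ≤ 1/2 := by
      have := gap_nonneg w hw k' htsD
      linarith
    have h3 : 0 < 2*((k':ℝ) - (KK w hw hlc i))*(th w hw hlc m - ts) := by
      have hA := A0_lt
      nlinarith
    have h4 : (KK w hw hlc i : ℝ) < k' := by nlinarith
    have : KK w hw hlc i < k' := by exact_mod_cast h4
    have : KK w hw hlc i + 1 ≤ k' := this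
    exact_mod_cast this
  -- combine
  have e1 := gap_sub w (KK w hw hlc i) (th w hw hlc m) (th w hw hlc (m+1))
  have e2 := gap_sub w k' (th w hw hlc m) (th w hw hlc (m+1))
  have hl := th_lt w hw hlc m
  have hg0 : g0 = 2 - A0 := rfl
  nlinarith [hcl2, hl]

/-- Backward growth of the gap of a not-yet-valid tangent. -/
lemma growth_bwd (j m : ℕ) (hjm : m + 2 ≤ j) :
    gap w (KK w hw hlc j) (th w hw hlc (m+1)) + g0 ≤ gap w (KK w hw hlc j) (th w hw hlc m) := by
  have hj1 : 1 ≤ j := by omega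
  obtain ⟨k', hk'⟩ := approx_tangent w hw hlc (th_mem w hw hlc (m+1))
  -- Claim 1' : gap k' at th m exceeds 2
  have hcl1 : 2 < gap w k' (th w hw hlc m) := by
    by_contra hcon
    push_neg at hcon
    obtain ⟨v, hvD, hv1, hv2⟩ := gap_right_pt w hw k' (th_mem w hw hlc (m+1))
      (lt_of_le_of_lt hk' (by linarith [A0_lt]))
    have := th_maximal w hw hlc m hcon hvD hv1
    linarith
  -- Claim 2' : k' < KK j
  obtain ⟨ts, htsD, hts⟩ := gap_exists_small w (KK w hw hlc j) (by norm_num : (0:ℝ) < 1/2)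
  have hts2 : th w hw hlc (j-1) < ts := by
    by_contra hcon
    push_neg at hcon
    have hseg : th w hw hlc (j-1) ∈ segment ℝ ts (th w hw hlc j) := by
      rw [segment_eq_Icc (le_trans hcon (th_mono w hw hlc |>.monotone (by omega)))]
      exact ⟨hcon, th_mono w hw hlc |>.monotone (by omega)⟩
    have := (gap_convex w hlc (KK w hw hlc j)).le_on_segment htsD (th_mem w hw hlc j) hseg
    have h5 := gap_at_th w hw hlc j
    have h6 := gap_before w hw hlc j hj1
    rcases le_max_iff.mp this with h | h
    · linarith
    · linarith
  have hm1j : th w hw hlc (m+1) ≤ th w hw hlc (j-1) :=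
    th_mono w hw hlc |>.monotone (by omega)
  have hgm1 : 2 < gap w (KK w hw hlc j) (th w hw hlc (m+1)) := by
    rcases eq_or_lt_of_le hm1j with heq | hlt
    · rw [heq]; exact gap_before w hw hlc j hj1
    · have hseg : th w hw hlc (j-1) ∈ segment ℝ (th w hw hlc (m+1)) ts := by
        rw [segment_eq_Icc (by linarith : th w hw hlc (m+1) ≤ ts)]
        exact ⟨hm1j, le_of_lt hts2⟩
      have := (gap_convex w hlc (KK w hw hlc j)).le_on_segment (th_mem w hw hlc (m+1)) htsD hseg
      have h6 := gap_before w hw hlc j hj1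
      rcases le_max_iff.mp this with h | h
      · linarith
      · linarith
  have hcl2 : (k' : ℝ) + 1 ≤ (KK w hw hlc j : ℝ) := by
    have hd := gap_gap w (KK w hw hlc j) k' (th w hw hlc (m+1)) ts
    have h1 : gap w (KK w hw hlc j) (th w hw hlc (m+1)) - gap w k' (th w hw hlc (m+1)) ≥ 2 - A0 := by
      linarith
    have h2 : gap w (KK w hw hlc j) ts - gap w k' ts ≤ 1/2 := by
      have := gap_nonneg w hw k' htsD
      linarith
    have h3 : ts - th w hw hlc (m+1) > 0 := by linarith
    have h4 : (k' : ℝ) < KK w hw hlc j := by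
      have hA := A0_lt
      nlinarith
    have : k' < KK w hw hlc j := by exact_mod_cast h4
    have : k' + 1 ≤ KK w hw hlc j := this
    exact_mod_cast this
  have e1 := gap_sub w (KK w hw hlc j) (th w hw hlc m) (th w hw hlc (m+1))
  have e2 := gap_sub w k' (th w hw hlc m) (th w hw hlc (m+1))
  have hl := th_lt w hw hlc m
  have hg0 : g0 = 2 - A0 := rfl
  nlinarith [hcl2, hl, hk']

/-- The chained lower bound, past side. -/
lemma gap_chain_past (i I : ℕ) (h : i + 2 ≤ I) :
    2 + g0 * ((I : ℝ) - (i:ℝ) - 2) ≤ gap w (KK w hw hlc i) (th w hw hlc I) := by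
  induction I, h using Nat.le_induction with
  | base =>
    have := gap_expired w hw hlc i (i+2) (le_refl _)
    push_cast
    ring_nf
    ring_nf at this
    linarith
  | succ n hn ih =>
    have hg := growth_fwd w hw hlc i n hn
    push_cast
    push_cast at ih
    linarith

/-- The chained lower bound, future side. -/
lemma gap_chain_future (j I : ℕ) (h : I + 2 ≤ j) :
    2 + g0 * ((j : ℝ) - (I:ℝ) - 2) ≤ gap w (KK w hw hlc j) (th w hw hlc (I+1)) := by
  obtain ⟨d, hd⟩ : ∃ d, j = I + 2 + d := ⟨j - (I+2), by omega⟩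
  subst hd
  clear h
  induction d generalizing I with
  | zero =>
    have h1 : 1 ≤ I + 2 + 0 := by omega
    have := gap_before w hw hlc (I+2+0) h1
    rw [show I + 2 + 0 - 1 = I + 1 by omega] at this
    push_cast
    ring_nf
    ring_nf at this
    linarith
  | succ d ih =>
    have h1 := ih (I+1)
    have hg := growth_bwd w hw hlc (I + 2 + (d+1)) (I+1) (by omega)
    rw [show I + 1 + 2 + d = I + 2 + (d+1) by omega] at h1
    push_cast
    push_cast at h1
    linarith

lemma gap_past_full (i I : ℕ) (h : i + 2 ≤ I) {t : ℝ} (ht : t ∈ Dom)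
    (htt : th w hw hlc I ≤ t) :
    2 + g0 * ((I : ℝ) - (i:ℝ) - 2) ≤ gap w (KK w hw hlc i) t := by
  refine le_trans (gap_chain_past w hw hlc i I h) ?_
  exact fwd_mono w hw hlc i (th_mem w hw hlc I) ht (th_mono w hw hlc (by omega)) htt

lemma gap_future_full (j I : ℕ) (h : I + 2 ≤ j) {t : ℝ} (ht : t ∈ Dom)
    (htt : t ≤ th w hw hlc (I+1)) :
    2 + g0 * ((j : ℝ) - (I:ℝ) - 2) ≤ gap w (KK w hw hlc j) t := by
  refine le_trans (gap_chain_future w hw hlc j I h) ?_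
  exact bwd_mono w hw hlc j (by omega) (th_mem w hw hlc (I+1)) ht
    (th_mono w hw hlc |>.monotone (by omega)) htt

lemma KK_inj : Function.Injective (KK w hw hlc) := by
  intro i j hij
  by_contra hne
  -- wlog i < j
  rcases Nat.lt_or_ge i j with h | h
  case _ =>
    set u : ℝ := (th w hw hlc j + th w hw hlc (j+1))/2 with hu
    have h1 : th w hw hlc j < u := by
      have := th_lt w hw hlc j; simp only [hu]; linarith
    have h2 : u < th w hw hlc (j+1) := by
      have := th_lt w hw hlc j; simp only [hu]; linarith
    have huD : u ∈ Dom := ⟨le_trans (th_mem w hw hlc j).1 (le_of_lt h1),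
      lt_trans h2 (th_mem w hw hlc (j+1)).2⟩
    have h3 : th w hw hlc (i+1) < u :=
      lt_of_le_of_lt (th_mono w hw hlc |>.monotone (by omega)) h1
    have h4 := th_maximal w hw hlc i (gap_at_th w hw hlc i) huD h3
    have h5 := gap_valid w hw hlc j (le_of_lt h1) h2
    rw [hij] at h4
    linarith
  case _ =>
    have hji : j < i := by omega
    set u : ℝ := (th w hw hlc i + th w hw hlc (i+1))/2 with hu
    have h1 : th w hw hlc i < u := by
      have := th_lt w hw hlc i; simp only [hu]; linarith
    have h2 : u < th w hw hlc (i+1) := by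
      have := th_lt w hw hlc i; simp only [hu]; linarith
    have huD : u ∈ Dom := ⟨le_trans (th_mem w hw hlc i).1 (le_of_lt h1),
      lt_trans h2 (th_mem w hw hlc (i+1)).2⟩
    have h3 : th w hw hlc (j+1) < u :=
      lt_of_le_of_lt (th_mono w hw hlc |>.monotone (by omega)) h1
    have h4 := th_maximal w hw hlc j (gap_at_th w hw hlc j) huD h3
    have h5 := gap_valid w hw hlc i (le_of_lt h1) h2
    rw [hij] at h5
    linarith

attribute [local instance] Classical.propDecidable

/-- Selected coefficients. -/
def coefSel (k : ℕ) : ℝ := if ∃ i, KK w hw hlc i = k then Real.exp (- psi w k) else 0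

/-- Final coefficients: a constant term is added to handle small radii. -/
def coef (k : ℕ) : ℝ := (if k = 0 then (w (1/2))^2 else 0) + coefSel w hw hlc k

def aseq (k : ℕ) : ℝ := Real.sqrt (coef w hw hlc k)

lemma coefSel_nonneg (k : ℕ) : 0 ≤ coefSel w hw hlc k := by
  simp only [coefSel]
  split <;> positivity

lemma coef_nonneg (k : ℕ) : 0 ≤ coef w hw hlc k := by
  simp only [coef]
  have := coefSel_nonneg w hw hlc k
  split <;> positivity

lemma aseq_sq (k : ℕ) : (aseq w hw hlc k)^2 = coef w hw hlc k := by
  rw [aseq]; exact Real.sq_sqrt (coef_nonneg w hw hlc k)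

lemma sel_term (k : ℕ) (t : ℝ) :
    Real.exp (- psi w k) * (Real.exp t)^(2*k) = Real.exp (phi w t - gap w k t) := by
  rw [← Real.exp_nat_mul, ← Real.exp_add]
  congr 1
  simp only [gap]
  push_cast
  ring

lemma psi_lb (hw : IsWeight w) (k : ℕ) {t : ℝ} (ht : t ∈ Dom) : 2*(k:ℝ)*t - phi w t ≤ psi w k :=
  le_csSup (psi_bddAbove w hw k) (Set.mem_image_of_mem _ ht)

lemma exp_two_log (x : ℝ) (hx : 0 < x) : Real.exp (2 * Real.log x) = x^2 := by
  rw [two_mul, Real.exp_add, Real.exp_log hx, sq]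

lemma summable_coef {r : ℝ} (hr : r ∈ Set.Ico (0:ℝ) 1) :
    Summable (fun k => coef w hw hlc k * r^(2*k)) := by
  obtain ⟨s, hs_half, hs_lt1, hrs⟩ : ∃ s : ℝ, (1/2:ℝ) ≤ s ∧ s < 1 ∧ r < s := by
    refine ⟨(max r (1/2) + 1)/2, ?_, ?_, ?_⟩
    · have := le_max_right r (1/2:ℝ); linarith
    · have := max_lt hr.2 (by norm_num : (1/2:ℝ) < 1); linarith
    · have h1 := le_max_left r (1/2:ℝ)
      have h2 := max_lt hr.2 (by norm_num : (1/2:ℝ) < 1)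
      linarith
  have hs_pos : (0:ℝ) < s := by linarith
  have hlogD : Real.log s ∈ Dom := by
    constructor
    · simp only [t0]
      have h1 : Real.log (1/2) ≤ Real.log s := Real.log_le_log (by norm_num) hs_half
      have h2 : Real.log (1/2) = - Real.log 2 := by
        rw [one_div, Real.log_inv]
      linarith
    · exact Real.log_neg hs_pos hs_lt1
  have hsne : s ≠ 0 := ne_of_gt hs_pos
  set C : ℝ := (w (1/2))^2 + Real.exp (phi w (Real.log s)) with hC
  set q : ℝ := (r/s)^2 with hq
  have hq0 : 0 ≤ q := by simp only [hq]; positivity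
  have hq1 : q < 1 := by
    have h1 : r/s < 1 := (div_lt_one hs_pos).mpr hrs
    have h2 : 0 ≤ r/s := div_nonneg hr.1 (le_of_lt hs_pos)
    simp only [hq]; nlinarith
  have hbound : ∀ k, coef w hw hlc k * r^(2*k) ≤ C * q^k := by
    intro k
    have hsel : coefSel w hw hlc k * r^(2*k) ≤ Real.exp (phi w (Real.log s)) * q^k := by
      have h1 : coefSel w hw hlc k ≤ Real.exp (- psi w k) := by
        simp only [coefSel]
        split
        · exact le_refl _
        · positivity
      have h2 : Real.exp (- psi w k) * s^(2*k) ≤ Real.exp (phi w (Real.log s)) := by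
        have h3 := psi_lb w hw k hlogD
        have h4 : s^(2*k) = Real.exp (2*(k:ℝ)*Real.log s) := by
          have h6 := Real.exp_nat_mul (Real.log s) (2*k)
          rw [Real.exp_log hs_pos] at h6
          rw [← h6]
          congr 1
          push_cast
          ring
        rw [h4, ← Real.exp_add]
        apply Real.exp_le_exp.mpr
        linarith
      have h5 : r^(2*k) = s^(2*k) * q^k := by
        simp only [hq]
        rw [← pow_mul, div_pow]
        field_simp
      calc coefSel w hw hlc k * r^(2*k) ≤ Real.exp (- psi w k) * r^(2*k) := by
            apply mul_le_mul_of_nonneg_right h1 (pow_nonneg hr.1 _)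
        _ = (Real.exp (- psi w k) * s^(2*k)) * q^k := by rw [h5]; ring
        _ ≤ Real.exp (phi w (Real.log s)) * q^k := by
            apply mul_le_mul_of_nonneg_right h2 (pow_nonneg hq0 _)
    have hite : (if k = 0 then (w (1/2))^2 else 0) * r^(2*k) ≤ (w (1/2))^2 * q^k := by
      split
      case _ h => subst h; simp
      case _ h =>
        have : (0:ℝ) ≤ (w (1/2))^2 * q^k := by positivity
        simpa using this
    simp only [coef]
    calc (((if k = 0 then (w (1/2))^2 else 0) + coefSel w hw hlc k)) * r^(2*k)
        = (if k = 0 then (w (1/2))^2 else 0) * r^(2*k) + coefSel w hw hlc k * r^(2*k) := by ring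
      _ ≤ (w (1/2))^2 * q^k + Real.exp (phi w (Real.log s)) * q^k := add_le_add hite hsel
      _ = C * q^k := by simp only [hC]; ring
  apply Summable.of_nonneg_of_le _ hbound
  · exact (summable_geometric_of_lt_one hq0 hq1).mul_left C
  · intro k
    have h1 := coef_nonneg w hw hlc k
    have h2 : (0:ℝ) ≤ r^(2*k) := pow_nonneg hr.1 _
    positivity

lemma summable_sel {r : ℝ} (hr : r ∈ Set.Ico (0:ℝ) 1) :
    Summable (fun k => coefSel w hw hlc k * r^(2*k)) := by
  apply Summable.of_nonneg_of_le _ _ (summable_coef w hw hlc hr)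
  · intro k
    exact mul_nonneg (coefSel_nonneg w hw hlc k) (pow_nonneg hr.1 _)
  · intro k
    apply mul_le_mul_of_nonneg_right _ (pow_nonneg hr.1 _)
    simp only [coef]
    have : (0:ℝ) ≤ (if k = 0 then (w (1/2))^2 else 0) := by split <;> positivity
    linarith

lemma summable_ite {r : ℝ} :
    Summable (fun k : ℕ => (if k = 0 then (w (1/2))^2 else 0) * r^(2*k)) := by
  apply summable_of_ne_finset_zero (s := {0})
  intro k hk
  simp only [Finset.mem_singleton] at hk
  simp [hk]

lemma tsum_split {r : ℝ} (hr : r ∈ Set.Ico (0:ℝ) 1) :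
    ∑' k, coef w hw hlc k * r^(2*k)
      = (w (1/2))^2 + ∑' k, coefSel w hw hlc k * r^(2*k) := by
  have h1 : (fun k => coef w hw hlc k * r^(2*k))
      = fun k => (if k = 0 then (w (1/2))^2 else 0) * r^(2*k) + coefSel w hw hlc k * r^(2*k) := by
    funext k
    simp only [coef]
    ring
  rw [h1, Summable.tsum_add (summable_ite w) (summable_sel w hw hlc hr)]
  congr 1
  have h2 : (fun k : ℕ => (if k = 0 then (w (1/2))^2 else 0) * r^(2*k))
      = fun k : ℕ => if k = 0 then (w (1/2))^2 else 0 := by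
    funext k
    split
    case _ h => subst h; simp
    case _ h => simp
  rw [h2]
  exact tsum_ite_eq 0 (fun _ => (w (1/2))^2)

lemma exp_two_ge : (36:ℝ)/5 ≤ Real.exp 2 := by
  have h := Real.exp_one_gt_d9
  have h2 : Real.exp 2 = Real.exp 1 * Real.exp 1 := by
    rw [← Real.exp_add]; norm_num
  nlinarith

lemma qb_eq : Real.exp (-g0) = 4 * Real.exp (-2) := by
  have h1 : -g0 = A0 + (-2) := by simp only [g0]; ring
  rw [h1, Real.exp_add]
  congr 1
  have : A0 = 2 * Real.log 2 := rfl
  rw [this, exp_two_log 2 (by norm_num)]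
  norm_num

lemma qb_le : Real.exp (-g0) ≤ 5/9 := by
  rw [qb_eq]
  have h1 := exp_two_ge
  have h2 : Real.exp (-2) = (Real.exp 2)⁻¹ := by
    rw [← Real.exp_neg]
  have h3 : (0:ℝ) < Real.exp 2 := Real.exp_pos 2
  rw [h2, inv_eq_one_div, mul_one_div, div_le_div_iff₀ h3 (by norm_num)]
  nlinarith

lemma qb_nonneg : 0 ≤ Real.exp (-g0) := le_of_lt (Real.exp_pos _)

lemma qb_lt_one : Real.exp (-g0) < 1 := by
  have := qb_le; linarith

lemma exp_neg_two_le : Real.exp (-2) ≤ 1/7 := by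
  have h1 := exp_two_ge
  have h2 : Real.exp (-2) = (Real.exp 2)⁻¹ := by rw [← Real.exp_neg]
  have h3 : (0:ℝ) < Real.exp 2 := Real.exp_pos 2
  rw [h2, inv_eq_one_div, div_le_div_iff₀ h3 (by norm_num)]
  nlinarith

lemma inv_one_sub_qb : (1 - Real.exp (-g0))⁻¹ ≤ 9/4 := by
  have h1 := qb_le
  have h2 : (4:ℝ)/9 ≤ 1 - Real.exp (-g0) := by linarith
  have h3 : (0:ℝ) < 4/9 := by norm_num
  calc (1 - Real.exp (-g0))⁻¹ ≤ ((4:ℝ)/9)⁻¹ := by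
        apply inv_anti₀ h3 h2
    _ = 9/4 := by norm_num

lemma cast_sub_helper (I i : ℕ) (h : i + 2 ≤ I) : ((I - i - 2 : ℕ) : ℝ) = (I:ℝ) - (i:ℝ) - 2 := by
  have h3 : (I - i - 2) + (i + 2) = I := by omega
  have h4 : (((I - i - 2) + (i + 2) : ℕ) : ℝ) = (I:ℝ) := by rw [h3]
  push_cast at h4
  linarith

set_option maxHeartbeats 1000000 in
lemma main_bounds {r : ℝ} (hr1 : 1/2 ≤ r) (hr2 : r < 1) :
    Real.exp (-2) * (w r)^2 ≤ (∑' k, coefSel w hw hlc k * r^(2*k)) ∧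
    (∑' k, coefSel w hw hlc k * r^(2*k)) ≤ 4 * (w r)^2 := by
  have hr0 : (0:ℝ) < r := by linarith
  have hrIco : r ∈ Set.Ico (0:ℝ) 1 := ⟨by linarith, hr2⟩
  set t : ℝ := Real.log r with ht
  have htD : t ∈ Dom := by
    constructor
    · simp only [ht, t0]
      have h1 : Real.log (1/2) ≤ Real.log r := Real.log_le_log (by norm_num) hr1
      rw [one_div, Real.log_inv] at h1
      linarith
    · exact Real.log_neg hr0 hr2
  have hexp : Real.exp t = r := Real.exp_log hr0
  have hwr : Real.exp (phi w t) = (w r)^2 := by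
    have h1 : phi w t = 2 * Real.log (w r) := by rw [phi, hexp]
    rw [h1, exp_two_log _ (hw.2.2.1 r hrIco)]
  obtain ⟨I, hI1, hI2⟩ := th_interval w hw hlc htD
  have hsum := summable_sel w hw hlc hrIco
  have hterm : ∀ i, coefSel w hw hlc (KK w hw hlc i) * r^(2*(KK w hw hlc i))
      = Real.exp (phi w t) * Real.exp (-(gap w (KK w hw hlc i) t)) := by
    intro i
    have h1 : coefSel w hw hlc (KK w hw hlc i) = Real.exp (- psi w (KK w hw hlc i)) := by
      simp only [coefSel]
      rw [if_pos ⟨i, rfl⟩]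
    rw [h1, ← hexp, sel_term, ← Real.exp_add]
    congr 1
    all_goals ring
  constructor
  · -- lower bound
    have h2 := Summable.le_tsum hsum (KK w hw hlc I)
      (fun j _ => mul_nonneg (coefSel_nonneg w hw hlc j) (pow_nonneg (le_of_lt hr0) _))
    have h3 := hterm I
    have h4 : gap w (KK w hw hlc I) t ≤ 2 := gap_valid w hw hlc I hI1 hI2
    have h5 : Real.exp (-2) ≤ Real.exp (-(gap w (KK w hw hlc I) t)) :=
      Real.exp_le_exp.mpr (by linarith)
    calc Real.exp (-2) * (w r)^2 = (w r)^2 * Real.exp (-2) := by ring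
      _ ≤ (w r)^2 * Real.exp (-(gap w (KK w hw hlc I) t)) := by
          apply mul_le_mul_of_nonneg_left h5 (by positivity)
      _ = Real.exp (phi w t) * Real.exp (-(gap w (KK w hw hlc I) t)) := by rw [hwr]
      _ = coefSel w hw hlc (KK w hw hlc I) * r^(2*(KK w hw hlc I)) := h3.symm
      _ ≤ _ := h2
  · -- upper bound
    have hsupp : Function.support (fun k => coefSel w hw hlc k * r^(2*k))
        ⊆ Set.range (KK w hw hlc) := by
      intro k hk
      by_contra hcon
      apply hk
      simp only [coefSel]
      rw [if_neg (show ¬∃ i, KK w hw hlc i = k from fun ⟨i, hi⟩ => hcon ⟨i, hi⟩)]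
      ring
    have hre : (∑' i, coefSel w hw hlc (KK w hw hlc i) * r^(2*(KK w hw hlc i)))
        = ∑' k, coefSel w hw hlc k * r^(2*k) := (KK_inj w hw hlc).tsum_eq hsupp
    rw [← hre]
    have hfeq : (fun i => coefSel w hw hlc (KK w hw hlc i) * r^(2*(KK w hw hlc i)))
        = fun i => Real.exp (phi w t) * Real.exp (-(gap w (KK w hw hlc i) t)) := funext hterm
    show (∑' i, coefSel w hw hlc (KK w hw hlc i) * r^(2*(KK w hw hlc i))) ≤ 4 * (w r)^2
    rw [hfeq, tsum_mul_left]
    have hS : Summable (fun i => Real.exp (-(gap w (KK w hw hlc i) t))) := by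
      have h1 : Summable (fun i => coefSel w hw hlc (KK w hw hlc i) * r^(2*(KK w hw hlc i))) :=
        hsum.comp_injective (KK_inj w hw hlc)
      rw [hfeq] at h1
      have h2 := h1.mul_left (Real.exp (phi w t))⁻¹
      have h3 : (fun i => (Real.exp (phi w t))⁻¹ *
          (Real.exp (phi w t) * Real.exp (-(gap w (KK w hw hlc i) t))))
          = fun i => Real.exp (-(gap w (KK w hw hlc i) t)) := by
        funext i
        rw [← mul_assoc, inv_mul_cancel₀ (ne_of_gt (Real.exp_pos _)), one_mul]
      rwa [h3] at h2
    suffices hfin : (∑' i, Real.exp (-(gap w (KK w hw hlc i) t))) ≤ 4 by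
      calc Real.exp (phi w t) * (∑' i, Real.exp (-(gap w (KK w hw hlc i) t)))
          ≤ Real.exp (phi w t) * 4 :=
            mul_le_mul_of_nonneg_left hfin (le_of_lt (Real.exp_pos _))
        _ = 4 * (w r)^2 := by rw [hwr]; ring
    -- the tail estimates
    have hpast : ∀ i, i + 2 ≤ I →
        Real.exp (-(gap w (KK w hw hlc i) t)) ≤ Real.exp (-2) * (Real.exp (-g0))^(I - i - 2) := by
      intro i hi
      have h1 := gap_past_full w hw hlc i I hi htD hI1
      have h2 := cast_sub_helper I i hi
      calc Real.exp (-(gap w (KK w hw hlc i) t))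
          ≤ Real.exp (-(2 + g0 * ((I:ℝ) - i - 2))) := Real.exp_le_exp.mpr (by linarith)
        _ = Real.exp (-2) * (Real.exp (-g0))^(I-i-2) := by
            rw [← Real.exp_nat_mul, ← Real.exp_add]
            congr 1
            rw [h2]
            ring
    have hmid : ∀ i, Real.exp (-(gap w (KK w hw hlc i) t)) ≤ 1 := by
      intro i
      have h1 := gap_nonneg w hw (KK w hw hlc i) htD
      calc Real.exp (-(gap w (KK w hw hlc i) t)) ≤ Real.exp 0 := Real.exp_le_exp.mpr (by linarith)
        _ = 1 := Real.exp_zero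
    have hfut : ∀ n : ℕ,
        Real.exp (-(gap w (KK w hw hlc (n + (I+2))) t)) ≤ Real.exp (-2) * (Real.exp (-g0))^n := by
      intro n
      have h1 := gap_future_full w hw hlc (n + (I+2)) I (by omega) htD (le_of_lt hI2)
      have h2 : ((n + (I+2) : ℕ) : ℝ) - (I:ℝ) - 2 = (n:ℝ) := by push_cast; ring
      rw [h2] at h1
      calc Real.exp (-(gap w (KK w hw hlc (n + (I+2))) t))
          ≤ Real.exp (-(2 + g0 * (n:ℝ))) := Real.exp_le_exp.mpr (by linarith)
        _ = Real.exp (-2) * (Real.exp (-g0))^n := by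
            rw [← Real.exp_nat_mul, ← Real.exp_add]
            congr 1
            ring
    have hsplit := Summable.sum_add_tsum_nat_add (f := fun i => Real.exp (-(gap w (KK w hw hlc i) t)))
      (I+2) hS
    rw [← hsplit]
    have hgeo : Summable (fun n : ℕ => (Real.exp (-g0))^n) :=
      summable_geometric_of_lt_one qb_nonneg qb_lt_one
    have hA : (∑ i ∈ Finset.range (I+2), Real.exp (-(gap w (KK w hw hlc i) t)))
        ≤ 3 + Real.exp (-2) * (1 - Real.exp (-g0))⁻¹ := by
      have h1 : ∀ i ∈ Finset.range (I+2), Real.exp (-(gap w (KK w hw hlc i) t)) ≤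
          (if i + 2 ≤ I then Real.exp (-2) * (Real.exp (-g0))^(I-i-2) else 1) := by
        intro i _
        split
        case _ h => exact hpast i h
        case _ h => exact hmid i
      have h2 := Finset.sum_le_sum h1
      refine le_trans h2 ?_
      rw [Finset.sum_ite]
      have hfil1 : Finset.filter (fun i => i + 2 ≤ I) (Finset.range (I+2)) = Finset.range (I-1) := by
        ext i
        simp only [Finset.mem_filter, Finset.mem_range]
        omega
      have hfil2 : Finset.filter (fun i => ¬(i + 2 ≤ I)) (Finset.range (I+2)) ⊆
          Finset.Icc (I-1) (I+1) := by
        intro i hi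
        simp only [Finset.mem_filter, Finset.mem_range] at hi
        simp only [Finset.mem_Icc]
        omega
      have h3 : (∑ i ∈ Finset.filter (fun i => i + 2 ≤ I) (Finset.range (I+2)),
          Real.exp (-2) * (Real.exp (-g0))^(I-i-2))
          ≤ Real.exp (-2) * (1 - Real.exp (-g0))⁻¹ := by
        rw [hfil1, ← Finset.mul_sum]
        apply mul_le_mul_of_nonneg_left _ (le_of_lt (Real.exp_pos _))
        have h4 : (∑ i ∈ Finset.range (I-1), (Real.exp (-g0))^(I-i-2))
            = ∑ n ∈ Finset.range (I-1), (Real.exp (-g0))^n := by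
          rw [← Finset.sum_range_reflect (fun n => (Real.exp (-g0))^n) (I-1)]
          apply Finset.sum_congr rfl
          intro j hj
          simp only [Finset.mem_range] at hj
          congr 1
          omega
        rw [h4]
        have h5 := Summable.sum_le_tsum (Finset.range (I-1)) (fun n _ => pow_nonneg qb_nonneg n) hgeo
        rwa [tsum_geometric_of_lt_one qb_nonneg qb_lt_one] at h5
      have h6 : (∑ _i ∈ Finset.filter (fun i => ¬(i + 2 ≤ I)) (Finset.range (I+2)), (1:ℝ)) ≤ 3 := by
        rw [Finset.sum_const, nsmul_eq_mul, mul_one]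
        have h7 := Finset.card_le_card hfil2
        rw [Nat.card_Icc] at h7
        have h8 : (Finset.filter (fun i => ¬(i + 2 ≤ I)) (Finset.range (I+2))).card ≤ 3 := by omega
        exact_mod_cast h8
      linarith
    have hB : (∑' n, Real.exp (-(gap w (KK w hw hlc (n + (I+2))) t)))
        ≤ Real.exp (-2) * (1 - Real.exp (-g0))⁻¹ := by
      have hS2 : Summable (fun n => Real.exp (-(gap w (KK w hw hlc (n + (I+2))) t))) :=
        hS.comp_injective (add_left_injective (I+2))
      have h1 := Summable.tsum_le_tsum hfut hS2 (hgeo.mul_left (Real.exp (-2)))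
      rwa [tsum_mul_left, tsum_geometric_of_lt_one qb_nonneg qb_lt_one] at h1
    have hx : Real.exp (-2) * (1 - Real.exp (-g0))⁻¹ ≤ 1/2 := by
      have h1 := exp_neg_two_le
      have h2 := inv_one_sub_qb
      have h3 : (0:ℝ) ≤ (1 - Real.exp (-g0))⁻¹ := inv_nonneg.mpr (by linarith [qb_le])
      nlinarith [Real.exp_pos (-2:ℝ)]
    linarith

lemma global_bounds {r : ℝ} (hr : r ∈ Set.Ico (0:ℝ) 1) :
    Real.exp (-2) * (w r)^2 ≤ (∑' k, coef w hw hlc k * r^(2*k)) ∧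
    (∑' k, coef w hw hlc k * r^(2*k))
      ≤ (5 * ((w (1/2))^2/(w 0)^2) + 5) * (w r)^2 := by
  have hhalf : (1/2:ℝ) ∈ Set.Ico (0:ℝ) 1 := by norm_num
  have h0 : (0:ℝ) ∈ Set.Ico (0:ℝ) 1 := by norm_num
  have hw0 : 0 < w 0 := hw.2.2.1 0 h0
  have hwh : 0 < w (1/2) := hw.2.2.1 _ hhalf
  have hwr : 0 < w r := hw.2.2.1 r hr
  have hw0r : w 0 ≤ w r := hw.2.1 h0 hr hr.1
  have hsplit := tsum_split w hw hlc hr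
  set X : ℝ := (w (1/2))^2/(w 0)^2 with hX
  have hX0 : 0 ≤ X := by simp only [hX]; positivity
  have hXe : X * (w 0)^2 = (w (1/2))^2 := by
    simp only [hX]; field_simp
  rcases le_or_gt (1/2) r with hc | hc
  · obtain ⟨hl, hu⟩ := main_bounds w hw hlc hc hr.2
    constructor
    · rw [hsplit]; nlinarith [sq_nonneg (w (1/2))]
    · rw [hsplit]
      have hsq : (w 0)^2 ≤ (w r)^2 := by nlinarith
      have h1 : (w (1/2))^2 ≤ X * (w r)^2 := by
        have := mul_le_mul_of_nonneg_left hsq hX0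
        linarith [hXe]
      nlinarith
  · have hrh : w r ≤ w (1/2) := hw.2.1 hr hhalf (le_of_lt hc)
    constructor
    · rw [hsplit]
      have h1 : (w r)^2 ≤ (w (1/2))^2 := by nlinarith
      have h2 : 0 ≤ ∑' k, coefSel w hw hlc k * r^(2*k) :=
        tsum_nonneg (fun k => mul_nonneg (coefSel_nonneg w hw hlc k) (pow_nonneg hr.1 _))
      have h3 : Real.exp (-2:ℝ) ≤ 1 := by
        calc Real.exp (-2:ℝ) ≤ Real.exp 0 := Real.exp_le_exp.mpr (by norm_num)
          _ = 1 := Real.exp_zero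
      nlinarith
    · have hmono : (∑' k, coef w hw hlc k * r^(2*k))
          ≤ ∑' k, coef w hw hlc k * (1/2:ℝ)^(2*k) := by
        apply Summable.tsum_le_tsum _ (summable_coef w hw hlc hr) (summable_coef w hw hlc hhalf)
        intro k
        apply mul_le_mul_of_nonneg_left _ (coef_nonneg w hw hlc k)
        exact pow_le_pow_left₀ hr.1 (le_of_lt hc) _
      have hhalfB := (main_bounds w hw hlc (le_refl (1/2:ℝ)) (by norm_num)).2
      have hsplit2 := tsum_split w hw hlc hhalf
      have hG12 : (∑' k, coef w hw hlc k * (1/2:ℝ)^(2*k)) ≤ 5 * (w (1/2))^2 := by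
        rw [hsplit2]; linarith
      have hsq : (w 0)^2 ≤ (w r)^2 := by nlinarith
      have h1 : (w (1/2))^2 ≤ X * (w r)^2 := by
        have := mul_le_mul_of_nonneg_left hsq hX0
        linarith [hXe]
      nlinarith

lemma summable_aseq {r : ℝ} (hr : r ∈ Set.Ico (0:ℝ) 1) :
    Summable (fun k => (aseq w hw hlc k)^2 * r^(2*k)) := by
  have h : (fun k => (aseq w hw hlc k)^2 * r^(2*k))
      = fun k => coef w hw hlc k * r^(2*k) := by
    funext k; rw [aseq_sq]
  rw [h]
  exact summable_coef w hw hlc hr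

lemma unif {ρ : ℝ} (hρ : ρ ∈ Set.Ico (0:ℝ) 1) :
    TendstoUniformlyOn (fun N r => ∑ k ∈ Finset.range N, coef w hw hlc k * r^(2*k))
      (fun r => ∑' k, coef w hw hlc k * r^(2*k)) Filter.atTop (Set.Icc 0 ρ) := by
  rw [Metric.tendstoUniformlyOn_iff]
  intro ε hε
  have hM : Summable (fun k => coef w hw hlc k * ρ^(2*k)) := summable_coef w hw hlc hρ
  have htail := tendsto_sum_nat_add (fun k => coef w hw hlc k * ρ^(2*k))
  have hev := Metric.tendsto_atTop.mp htail ε hε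
  obtain ⟨N0, hN0⟩ := hev
  filter_upwards [Filter.eventually_ge_atTop N0] with N hN
  intro r hrI
  have hrIco : r ∈ Set.Ico (0:ℝ) 1 := ⟨hrI.1, lt_of_le_of_lt hrI.2 hρ.2⟩
  have hfr : Summable (fun k => coef w hw hlc k * r^(2*k)) := summable_coef w hw hlc hrIco
  have hsplit := Summable.sum_add_tsum_nat_add (f := fun k => coef w hw hlc k * r^(2*k)) N hfr
  have htail_le : (∑' k, (fun k => coef w hw hlc k * r^(2*k)) (k+N))
      ≤ ∑' k, (fun k => coef w hw hlc k * ρ^(2*k)) (k+N) := by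
    apply Summable.tsum_le_tsum _ (hfr.comp_injective (add_left_injective N))
      (hM.comp_injective (add_left_injective N))
    intro k
    show coef w hw hlc (k+N) * r^(2*(k+N)) ≤ coef w hw hlc (k+N) * ρ^(2*(k+N))
    apply mul_le_mul_of_nonneg_left _ (coef_nonneg w hw hlc _)
    exact pow_le_pow_left₀ hrI.1 hrI.2 _
  have htail_nn : 0 ≤ ∑' k, (fun k => coef w hw hlc k * r^(2*k)) (k+N) :=
    tsum_nonneg (fun k => mul_nonneg (coef_nonneg w hw hlc _) (pow_nonneg hrI.1 _))
  have hd := hN0 N hN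
  rw [Real.dist_eq, sub_zero] at hd
  have hMnn : 0 ≤ ∑' k, (fun k => coef w hw hlc k * ρ^(2*k)) (k+N) :=
    tsum_nonneg (fun k => mul_nonneg (coef_nonneg w hw hlc _) (pow_nonneg hρ.1 _))
  rw [abs_of_nonneg hMnn] at hd
  rw [Real.dist_eq]
  have he : (∑' k, coef w hw hlc k * r^(2*k)) - (∑ k ∈ Finset.range N, coef w hw hlc k * r^(2*k))
      = ∑' k, (fun k => coef w hw hlc k * r^(2*k)) (k+N) := by
    linarith [hsplit]
  rw [he, abs_of_nonneg htail_nn]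
  linarith

end AD

theorem stmt4 (w : ℝ → ℝ) (hw : IsWeight w) (hlc : IsLogConvex w) :
    ∃ a : ℕ → ℝ, ∃ c₁ c₂ : ℝ, 0 < c₁ ∧ 0 < c₂ ∧
      (∀ r ∈ Set.Ico (0:ℝ) 1, Summable (fun k => (a k)^2 * r^(2*k)) ∧
        c₁ * (w r)^2 ≤ ∑' k, (a k)^2 * r^(2*k) ∧
        (∑' k, (a k)^2 * r^(2*k)) ≤ c₂ * (w r)^2) ∧
      ∀ ρ ∈ Set.Ico (0:ℝ) 1,
        TendstoUniformlyOn (fun N r => ∑ k ∈ Finset.range N, (a k)^2 * r^(2*k))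
          (fun r => ∑' k, (a k)^2 * r^(2*k)) Filter.atTop (Set.Icc 0 ρ) := by
  classical
  refine ⟨AD.aseq w hw hlc, Real.exp (-2), 5 * ((w (1/2))^2/(w 0)^2) + 5,
    Real.exp_pos _, by positivity, ?_, ?_⟩
  · intro r hr
    obtain ⟨h1, h2⟩ := AD.global_bounds w hw hlc hr
    refine ⟨?_, ?_, ?_⟩
    · simpa only [AD.aseq_sq w hw hlc] using AD.summable_coef w hw hlc hr
    · simpa only [AD.aseq_sq w hw hlc] using h1
    · simpa only [AD.aseq_sq w hw hlc] using h2
  · intro ρ hρ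
    have h := AD.unif w hw hlc hρ
    simpa only [AD.aseq_sq w hw hlc] using h
end
end

section
/- Every doubling weight function w on [0,1) is equivalent to a log-convex weight function. -/
open MeasureTheory Set Metric

noncomputable section

theorem stmt17 (w : ℝ → ℝ) (hw : IsWeight w) (A : ℝ) (hA : 1 < A)
    (hdoub : ∀ s : ℝ, 0 < s → s ≤ 1 → w (1 - s/2) ≤ A * w (1 - s)) :
    ∃ v : ℝ → ℝ, IsWeight v ∧ IsLogConvex v ∧ EquivOn01 w v := by
  obtain ⟨hc, hm, hpos, hub⟩ := hw
  have hw0 : 0 < w 0 := hpos 0 ⟨le_rfl, one_pos⟩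
  set L := Real.log A with hLdef
  have hL : 0 < L := Real.log_pos hA
  have hln2 : 0 < Real.log 2 := Real.log_pos one_lt_two
  set C : ℝ := L + L / Real.log 2 with hCdef
  have hC : 0 < C := by positivity
  set φ : ℝ → ℝ := fun t => Real.log (w (Real.exp t)) with hφdef
  have hmem : ∀ t : ℝ, t < 0 → Real.exp t ∈ Set.Ico (0:ℝ) 1 :=
    fun t ht => ⟨(Real.exp_pos t).le, Real.exp_lt_one_iff.2 ht⟩
  have hφm : ∀ u t : ℝ, u ≤ t → t < 0 → φ u ≤ φ t := by
    intro u t h ht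
    exact Real.log_le_log (hpos _ (hmem u (lt_of_le_of_lt h ht)))
      (hm (hmem u (lt_of_le_of_lt h ht)) (hmem t ht) (Real.exp_le_exp.2 h))
  -- the family of affine minorants
  set S : ℝ → Set ℝ :=
    fun t => {y | ∃ a b : ℝ, (∀ u < (0:ℝ), a*u + b ≤ φ u) ∧ y = a*t + b} with hSdef
  set ψ : ℝ → ℝ := fun t => sSup (S t) with hψdef
  have hconstmin : ∀ u < (0:ℝ), (0:ℝ)*u + Real.log (w 0) ≤ φ u := by
    intro u hu
    have := Real.log_le_log hw0 (hm ⟨le_rfl, one_pos⟩ (hmem u hu) (Real.exp_pos u).le)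
    simpa using this
  have hSne : ∀ t : ℝ, (S t).Nonempty :=
    fun t => ⟨0*t + Real.log (w 0), 0, Real.log (w 0), hconstmin, rfl⟩
  have hSbdd : ∀ t : ℝ, t < 0 → BddAbove (S t) := by
    rintro t ht
    exact ⟨φ t, by rintro y ⟨a, b, hab, rfl⟩; exact hab t ht⟩
  have hψ_le : ∀ t : ℝ, t < 0 → ψ t ≤ φ t :=
    fun t ht => csSup_le (hSne t) (by rintro y ⟨a, b, hab, rfl⟩; exact hab t ht)
  have hψ_ge : ∀ t : ℝ, t < 0 → Real.log (w 0) ≤ ψ t := by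
    intro t ht
    have : (0:ℝ)*t + Real.log (w 0) ∈ S t := ⟨0, Real.log (w 0), hconstmin, rfl⟩
    have := le_csSup (hSbdd t ht) this
    simpa using this
  have hslope : ∀ a b : ℝ, (∀ u < (0:ℝ), a*u + b ≤ φ u) → 0 ≤ a := by
    intro a b hab
    by_contra h
    push_neg at h
    set u : ℝ := min (-1) ((φ (-1) + 1 - b)/a) with hudef
    have hu1 : u ≤ -1 := min_le_left _ _
    have hu : u < 0 := lt_of_le_of_lt hu1 (by norm_num)
    have h2 : u ≤ (φ (-1) + 1 - b)/a := min_le_right _ _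
    have haX : a * ((φ (-1) + 1 - b)/a) = φ (-1) + 1 - b := by
      rw [← mul_div_assoc, mul_comm, mul_div_assoc, div_self h.ne, mul_one]
    have h3 : φ (-1) + 1 - b ≤ a * u := by
      rw [← haX]; exact mul_le_mul_of_nonpos_left h2 h.le
    have h4 := hab u hu
    have h5 := hφm u (-1) hu1 (by norm_num)
    linarith
  have hψmono : ∀ t₁ t₂ : ℝ, t₁ ≤ t₂ → t₂ < 0 → ψ t₁ ≤ ψ t₂ := by
    intro t₁ t₂ h ht₂
    refine csSup_le (hSne t₁) ?_
    rintro y ⟨a, b, hab, rfl⟩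
    have ha := hslope a b hab
    have : a*t₁ + b ≤ a*t₂ + b := by nlinarith
    exact this.trans (le_csSup (hSbdd t₂ ht₂) ⟨a, b, hab, rfl⟩)
  have hconv : ConvexOn ℝ (Set.Iio (0:ℝ)) ψ := by
    refine ⟨convex_Iio 0, ?_⟩
    intro x hx y hy p q hp hq hpq
    refine csSup_le (hSne _) ?_
    rintro z ⟨a, b, hab, rfl⟩
    have hx' := le_csSup (hSbdd x hx) ⟨a, b, hab, rfl⟩
    have hy' := le_csSup (hSbdd y hy) ⟨a, b, hab, rfl⟩
    calc a*(p • x + q • y) + b = p*(a*x+b) + q*(a*y+b) := by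
          simp only [smul_eq_mul]; linear_combination (-b) * hpq
      _ ≤ p * ψ x + q * ψ y :=
          add_le_add (mul_le_mul_of_nonneg_left hx' hp) (mul_le_mul_of_nonneg_left hy' hq)
      _ = p • ψ x + q • ψ y := by simp [smul_eq_mul]

  have hiter : ∀ s : ℝ, 0 < s → s ≤ 1 → ∀ k : ℕ, w (1 - s/2^k) ≤ A^k * w (1-s) := by
    intro s hs hs1 k
    induction k with
    | zero => simp
    | succ k ih =>
      have h1 : 0 < s/2^k := by positivity
      have h2 : s/2^k ≤ 1 :=
        le_trans (div_le_self hs.le (one_le_pow₀ one_le_two)) hs1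
      have h3 : s/2^(k+1) = (s/2^k)/2 := by ring
      calc w (1 - s/2^(k+1)) = w (1 - (s/2^k)/2) := by rw [h3]
        _ ≤ A * w (1 - s/2^k) := hdoub _ h1 h2
        _ ≤ A * (A^k * w (1-s)) :=
            mul_le_mul_of_nonneg_left ih (by positivity)
        _ = A^(k+1) * w (1-s) := by ring
  have hcomp : ∀ σ s : ℝ, 0 < σ → σ ≤ s → s ≤ 1 →
      Real.log (w (1-σ)) ≤ L * (1 + Real.log (s/σ)/Real.log 2) + Real.log (w (1-s)) := by
    intro σ s hσ hσs hs1
    have hs : 0 < s := lt_of_lt_of_le hσ hσs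
    set x := Real.logb 2 (s/σ) with hxdef
    have hx0 : 0 ≤ x := Real.logb_nonneg one_lt_two ((one_le_div hσ).2 hσs)
    set k := ⌈x⌉₊ with hkdef
    have hxk : x ≤ (k:ℝ) := Nat.le_ceil x
    have hk1 : (k:ℝ) ≤ x + 1 := (Nat.ceil_lt_add_one hx0).le
    have h2k : s/σ ≤ 2^k := by
      calc s/σ = (2:ℝ) ^ x := (Real.rpow_logb two_pos (by norm_num) (by positivity)).symm
        _ ≤ (2:ℝ) ^ (k:ℝ) := Real.rpow_le_rpow_of_exponent_le one_le_two hxk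
        _ = 2^k := by rw [Real.rpow_natCast]
    have hsk : s/2^k ≤ σ := by
      rw [div_le_iff₀ (by positivity : (0:ℝ) < 2^k)]
      rw [div_le_iff₀ hσ] at h2k
      linarith
    have hskpos : 0 < s/2^k := by positivity
    have hsk1 : s/2^k ≤ 1 := le_trans (div_le_self hs.le (one_le_pow₀ one_le_two)) hs1
    have hmono : w (1-σ) ≤ w (1 - s/2^k) :=
      hm ⟨by linarith, by linarith⟩ ⟨by linarith, by linarith⟩ (by linarith)
    have hw1s : 0 < w (1-s) := hpos _ ⟨by linarith, by linarith⟩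
    have hw1σ : 0 < w (1-σ) := hpos _ ⟨by linarith, by linarith⟩
    have hkL : (k:ℝ) * L ≤ (x+1) * L := mul_le_mul_of_nonneg_right hk1 hL.le
    calc Real.log (w (1-σ)) ≤ Real.log (A^k * w (1-s)) :=
          Real.log_le_log hw1σ (le_trans hmono (hiter s hs hs1 k))
      _ = (k:ℝ) * L + Real.log (w (1-s)) := by
          rw [Real.log_mul (by positivity) hw1s.ne', Real.log_pow]
      _ ≤ (x+1) * L + Real.log (w (1-s)) := by linarith
      _ = L * (1 + Real.log (s/σ)/Real.log 2) + Real.log (w (1-s)) := by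
          rw [hxdef, Real.logb]; ring
  have hkey : ∀ t : ℝ, t < 0 → φ t - C ≤ ψ t := by
    intro t ht
    have het : 0 < 1 - Real.exp t := by
      have := Real.exp_lt_one_iff.2 ht; linarith
    set m : ℝ := (L/Real.log 2) * (Real.exp t/(1 - Real.exp t)) with hmdef
    have hm0 : 0 ≤ m := by positivity
    have hmin : ∀ u < (0:ℝ), m*u + (φ t - C - m*t) ≤ φ u := by
      intro u hu
      rcases le_or_gt t u with h | h
      · have e1 : Real.exp (-t) * Real.exp t = 1 := by
          rw [← Real.exp_add]; simp
        have h1 : -t * Real.exp t ≤ 1 - Real.exp t := by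
          nlinarith [Real.add_one_le_exp (-t), Real.exp_pos t]
        have hmu : m*u - m*t ≤ L / Real.log 2 := by
          calc m*u - m*t = m*(u-t) := by ring
            _ ≤ m*(-t) := mul_le_mul_of_nonneg_left (by linarith) hm0
            _ = (L/Real.log 2) * ((-t) * Real.exp t / (1 - Real.exp t)) := by
                rw [hmdef]; ring
            _ ≤ (L/Real.log 2) * 1 := by
                refine mul_le_mul_of_nonneg_left ?_ (by positivity)
                rw [div_le_one het]; exact h1
            _ = L/Real.log 2 := mul_one _
        have hφtu := hφm t u h hu
        rw [hCdef] at *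
        linarith
      · have heu : 0 < 1 - Real.exp u := by
          have := Real.exp_lt_one_iff.2 hu; linarith
        have hσs : 1 - Real.exp t ≤ 1 - Real.exp u := by
          have := Real.exp_le_exp.2 h.le; linarith
        have hs1 : 1 - Real.exp u ≤ 1 := by linarith [Real.exp_pos u]
        have hc1 := hcomp (1 - Real.exp t) (1 - Real.exp u) het hσs hs1
        simp only [sub_sub_cancel] at hc1
        have hlog : Real.log ((1 - Real.exp u)/(1 - Real.exp t))
            ≤ (t - u) * Real.exp t / (1 - Real.exp t) := by
          have h1 := Real.log_le_sub_one_of_pos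
            (show (0:ℝ) < (1 - Real.exp u)/(1 - Real.exp t) by positivity)
          have h2 : (1 - Real.exp u)/(1 - Real.exp t) - 1
              = (Real.exp t - Real.exp u)/(1 - Real.exp t) := by field_simp; ring
          have e1 : Real.exp (u - t) * Real.exp t = Real.exp u := by
            rw [← Real.exp_add]; ring_nf
          have h3 : Real.exp t - Real.exp u ≤ (t - u) * Real.exp t := by
            nlinarith [Real.add_one_le_exp (u - t), Real.exp_pos t]
          have h4 : (Real.exp t - Real.exp u)/(1 - Real.exp t)
              ≤ (t - u) * Real.exp t / (1 - Real.exp t) := by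
            apply div_le_div_of_nonneg_right h3 het.le
          linarith [h1, h2 ▸ h1]
        have h6 : (L/Real.log 2) * Real.log ((1-Real.exp u)/(1-Real.exp t))
            ≤ (L/Real.log 2) * ((t-u) * Real.exp t/(1-Real.exp t)) :=
          mul_le_mul_of_nonneg_left hlog (by positivity)
        have h7 : φ t ≤ L + (L/Real.log 2) * Real.log ((1-Real.exp u)/(1-Real.exp t)) + φ u := by
          calc φ t ≤ L * (1 + Real.log ((1-Real.exp u)/(1-Real.exp t))/Real.log 2) + φ u := hc1
            _ = L + (L/Real.log 2) * Real.log ((1-Real.exp u)/(1-Real.exp t)) + φ u := by ring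
        have h8 : (L/Real.log 2) * ((t-u) * Real.exp t/(1-Real.exp t)) = m*t - m*u := by
          rw [hmdef]; ring
        have hLl : 0 < L/Real.log 2 := by positivity
        rw [hCdef] at *
        linarith
    exact le_csSup (hSbdd t ht) ⟨m, φ t - C - m*t, hmin, by ring⟩

  set v : ℝ → ℝ := fun r => if r ≤ 0 then w 0 else Real.exp (ψ (Real.log r)) with hvdef
  have hv0 : v 0 = w 0 := if_pos le_rfl
  have hvpos' : ∀ r : ℝ, 0 < r → v r = Real.exp (ψ (Real.log r)) :=
    fun r hr => if_neg (not_le.2 hr)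
  have hlogneg : ∀ r : ℝ, 0 < r → r < 1 → Real.log r < 0 := fun r h1 h2 => Real.log_neg h1 h2
  have hφr : ∀ r : ℝ, 0 < r → r < 1 → φ (Real.log r) = Real.log (w r) := by
    intro r h1 h2
    rw [hφdef]; simp only []; rw [Real.exp_log h1]
  have hv_lower : ∀ r ∈ Set.Ico (0:ℝ) 1, w 0 ≤ v r := by
    rintro r ⟨hr0, hr1⟩
    rcases eq_or_lt_of_le hr0 with h | h
    · rw [← h, hv0]
    · rw [hvpos' r h]
      calc w 0 = Real.exp (Real.log (w 0)) := (Real.exp_log hw0).symm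
        _ ≤ Real.exp (ψ (Real.log r)) :=
          Real.exp_le_exp.2 (hψ_ge _ (hlogneg r h hr1))
  have hv_le_w : ∀ r ∈ Set.Ico (0:ℝ) 1, v r ≤ w r := by
    rintro r ⟨hr0, hr1⟩
    rcases eq_or_lt_of_le hr0 with h | h
    · rw [← h, hv0]
    · rw [hvpos' r h]
      have := hψ_le _ (hlogneg r h hr1)
      rw [hφr r h hr1] at this
      calc Real.exp (ψ (Real.log r)) ≤ Real.exp (Real.log (w r)) := Real.exp_le_exp.2 this
        _ = w r := Real.exp_log (hpos r ⟨hr0, hr1⟩)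
  have hw_le : ∀ r ∈ Set.Ico (0:ℝ) 1, w r ≤ Real.exp C * v r := by
    rintro r ⟨hr0, hr1⟩
    rcases eq_or_lt_of_le hr0 with h | h
    · rw [← h, hv0]
      nlinarith [Real.one_le_exp hC.le, hw0]
    · rw [hvpos' r h]
      have := hkey _ (hlogneg r h hr1)
      rw [hφr r h hr1] at this
      calc w r = Real.exp (Real.log (w r)) := (Real.exp_log (hpos r ⟨hr0, hr1⟩)).symm
        _ ≤ Real.exp (C + ψ (Real.log r)) := Real.exp_le_exp.2 (by linarith)
        _ = Real.exp C * Real.exp (ψ (Real.log r)) := Real.exp_add _ _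
  have hvmono : MonotoneOn v (Set.Ico (0:ℝ) 1) := by
    rintro r ⟨hr0, hr1⟩ s ⟨hs0, hs1⟩ hrs
    rcases eq_or_lt_of_le hr0 with h | h
    · rw [← h, hv0]; exact hv_lower s ⟨hs0, hs1⟩
    · have hs : 0 < s := lt_of_lt_of_le h hrs
      rw [hvpos' r h, hvpos' s hs]
      exact Real.exp_le_exp.2 (hψmono _ _ (Real.log_le_log h hrs) (hlogneg s hs hs1))
  have hvcont : ContinuousOn v (Set.Ico (0:ℝ) 1) := by
    rintro r ⟨hr0, hr1⟩
    rcases eq_or_lt_of_le hr0 with h | h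
    · subst h
      rw [ContinuousWithinAt, hv0]
      have hwct : Filter.Tendsto w (nhdsWithin 0 (Set.Ico (0:ℝ) 1)) (nhds (w 0)) :=
        hc 0 ⟨le_rfl, one_pos⟩
      refine tendsto_of_tendsto_of_tendsto_of_le_of_le' tendsto_const_nhds hwct ?_ ?_
      · exact Filter.eventually_of_mem self_mem_nhdsWithin (fun x hx => hv_lower x hx)
      · exact Filter.eventually_of_mem self_mem_nhdsWithin (fun x hx => hv_le_w x hx)
    · have hψc : ContinuousOn ψ (Set.Iio (0:ℝ)) := hconv.continuousOn isOpen_Iio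
      have h1 : ContinuousAt ψ (Real.log r) :=
        hψc.continuousAt (isOpen_Iio.mem_nhds (hlogneg r h hr1))
      have h2 : ContinuousAt (fun x : ℝ => Real.exp (ψ (Real.log x))) r :=
        Real.continuous_exp.continuousAt.comp
          (h1.comp (Real.continuousAt_log (ne_of_gt h)))
      have h3 : ContinuousAt v r := by
        refine h2.congr ?_
        filter_upwards [eventually_gt_nhds h] with x hx
        exact (hvpos' x hx).symm
      exact h3.continuousWithinAt
  refine ⟨v, ?_, ?_, ?_⟩
  · refine ⟨hvcont, hvmono, fun r hr => lt_of_lt_of_le hw0 (hv_lower r hr), ?_⟩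
    intro M
    obtain ⟨r, hr, hM⟩ := hub (Real.exp C * M)
    refine ⟨r, hr, ?_⟩
    have h1 := hw_le r hr
    exact (mul_lt_mul_iff_right₀ (Real.exp_pos C)).1 (lt_of_lt_of_le hM h1)
  · have heq : (fun t => Real.log (v (Real.exp t))) = ψ := by
      funext t
      rw [hvpos' _ (Real.exp_pos t), Real.log_exp, Real.log_exp]
    show ConvexOn ℝ (Set.Iio (0:ℝ)) fun t => Real.log (v (Real.exp t))
    rw [heq]
    exact hconv
  · exact ⟨1, Real.exp C, one_pos, Real.exp_pos C,
      fun r hr => ⟨by rw [one_mul]; exact hv_le_w r hr, hw_le r hr⟩⟩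
end
end
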